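/- Let S be a commutative ring with automorphism σ, m ≥ 1, b ∈ S a non-zero-divisor, and 1 < k < m. Let r > 0 be the least integer with rk ≥ m. If the element z = α t^k in the Petit algebra S_b = S[t;σ]/S[t;σ](t^m − b), with α a non-zero-divisor, satisfies z^r · z = z · z^r (where z^r is the well-defined r-th power), then α·b = σ^m(α)·σ^k(b). -/

import Mathlib

open Finset

noncomputable section

namespace PetitFormal

variable {S : Type*}

/-- Partial norm `N_i^τ(β) = ∏_{j=0}^{i-1} τ^j(β)`. -/
def pnorm [CommRing S] (τ : RingAut S) (i : ℕ) (β : S) : S :=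
  ∏ j ∈ Finset.range i, (τ ^ j) β

/-- Multiplication in the skew polynomial ring `S[t;σ]`, with `t·a = σ(a)·t`,
modelled on finitely supported functions `ℕ →₀ S`. -/
def skewMul [CommRing S] (σ : RingAut S) (x y : ℕ →₀ S) : ℕ →₀ S :=
  x.sum fun i c => y.sum fun j d => Finsupp.single (i + j) (c * (σ ^ i) d)

/-- Embedding of degree `< m` polynomials into `ℕ →₀ S`. -/
def toPoly [CommRing S] {m : ℕ} (x : Fin m → S) : ℕ →₀ S :=
  ∑ i : Fin m, Finsupp.single (i : ℕ) (x i)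

/-- One pass of right division by the monic polynomial `f = t^m - f0(t)`:
`reduceAux σ m f0 K` reduces a skew polynomial supported in `[0, m+K)`
to one supported in `[0, m)`, using `t^{m+j} ≡ ∑_i σ^j(f0 i) t^{j+i}` (mod_r f). -/
def reduceAux [CommRing S] (σ : RingAut S) (m : ℕ) (f0 : Fin m → S) :
    ℕ → (ℕ →₀ S) → (ℕ →₀ S)
  | 0, x => x
  | K + 1, x =>
      reduceAux σ m f0 K
        (x - Finsupp.single (m + K) (x (m + K))
          + ∑ j : Fin m, Finsupp.single (K + (j : ℕ)) (x (m + K) * (σ ^ K) (f0 j)))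

/-- Multiplication in the (generally nonassociative) Petit algebra
`S_f = S[t;σ]/S[t;σ](t^m - f0(t))`: multiply in `S[t;σ]` and reduce by right
division by `f = t^m - f0(t)`. -/
def petitMul [CommRing S] (σ : RingAut S) (m : ℕ) (f0 : Fin m → S)
    (x y : Fin m → S) : Fin m → S :=
  fun d => (reduceAux σ m f0 m (skewMul σ (toPoly x) (toPoly y))) (d : ℕ)

/-- The coefficient vector of the constant `a`, so that `t^m - f0 = t^m - a`. -/
def constF [CommRing S] (m : ℕ) (a : S) : Fin m → S :=
  fun i => if (i : ℕ) = 0 then a else 0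

/-- Multiplication in the Petit algebra `S_a = S[t;σ]/S[t;σ](t^m - a)`. -/
def petitMulC [CommRing S] (σ : RingAut S) (m : ℕ) (a : S) :
    (Fin m → S) → (Fin m → S) → (Fin m → S) :=
  petitMul σ m (constF m a)

/-- The monomial `c t^k` as an element of the Petit algebra (zero if `k ≥ m`). -/
def mono [CommRing S] (m : ℕ) (c : S) (k : ℕ) : Fin m → S :=
  fun i => if (i : ℕ) = k then c else 0

/-- The identity `1 = 1·t^0` of the Petit algebra. -/
def pone [CommRing S] (m : ℕ) : Fin m → S := mono m 1 0

/-- Left-nested power `L(z,s) = z(z(⋯(z)))` (`s` factors) in the Petit algebra. -/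
def lpow [CommRing S] (σ : RingAut S) (m : ℕ) (f0 : Fin m → S) (z : Fin m → S) :
    ℕ → Fin m → S
  | 0 => pone m
  | s + 1 => petitMul σ m f0 z (lpow σ m f0 z s)

/-- `G` is a (unital) ring homomorphism from the Petit algebra `S_f` to `S_g`. -/
def IsPetitHom [CommRing S] (σ : RingAut S) (m : ℕ) (f0 g0 : Fin m → S)
    (G : (Fin m → S) → (Fin m → S)) : Prop :=
  (∀ x y, G (x + y) = G x + G y) ∧
  (∀ x y, G (petitMul σ m f0 x y) = petitMul σ m g0 (G x) (G y)) ∧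
  G (pone m) = pone m

/-- `G` is a (unital) ring endomorphism of the skew polynomial ring `S[t;σ]`. -/
def IsSkewHom [CommRing S] (σ : RingAut S) (G : (ℕ →₀ S) → (ℕ →₀ S)) : Prop :=
  (∀ x y, G (x + y) = G x + G y) ∧
  (∀ x y, G (skewMul σ x y) = skewMul σ (G x) (G y)) ∧
  G (Finsupp.single 0 1) = Finsupp.single 0 1

/-- `G` is a (unital) ring homomorphism from `S[t;σ]` to the Petit algebra `S_g`. -/
def IsSkewToPetitHom [CommRing S] (σ : RingAut S) (m : ℕ) (g0 : Fin m → S)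
    (G : (ℕ →₀ S) → (Fin m → S)) : Prop :=
  (∀ x y, G (x + y) = G x + G y) ∧
  (∀ x y, G (skewMul σ x y) = petitMul σ m g0 (G x) (G y)) ∧
  G (Finsupp.single 0 1) = pone m

/-- The monomial map `G_{τ,α,k}` on `S[t;σ]`:
`∑ a_i t^i ↦ ∑ τ(a_i) (α t^k)^i = ∑ τ(a_i) N_i^{σ^k}(α) t^{ik}`. -/
def skewMonomialMap [CommRing S] (σ τ : RingAut S) (α : S) (k : ℕ)
    (x : ℕ →₀ S) : ℕ →₀ S :=
  x.sum fun i c => Finsupp.single (i * k) (τ c * pnorm (σ ^ k) i α)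

/-- The monomial map `G_{τ,α,k}` from `S[t;σ]` into the Petit algebra `S_g`:
`∑ a_i t^i ↦ ∑ τ(a_i) (α t^k)^i`, powers computed by left nesting. -/
def skewToPetitMonomialMap [CommRing S] (σ τ : RingAut S) (m : ℕ)
    (g0 : Fin m → S) (α : S) (k : ℕ) (x : ℕ →₀ S) : Fin m → S :=
  x.sum fun i c => τ c • lpow σ m g0 (mono m α k) i

/-- The monomial map `G_{τ,α,k}` between Petit algebras of degree `m`:
`∑_{i<m} a_i t^i ↦ ∑_{i<m} τ(a_i) (α t^k)^i`, powers computed by left nesting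
in the codomain `S_g`. -/
def petitMonomialMap [CommRing S] (σ τ : RingAut S) (m : ℕ)
    (g0 : Fin m → S) (α : S) (k : ℕ) (x : Fin m → S) : Fin m → S :=
  ∑ i : Fin m, τ (x i) • lpow σ m g0 (mono m α k) (i : ℕ)

/-- The Hamming weight: the number of nonzero coefficients. -/
def hwt [CommRing S] {m : ℕ} (x : Fin m → S) : ℕ := by
  classical exact (Finset.univ.filter fun i => x i ≠ 0).card

end PetitFormal

open PetitFormal

namespace Aux

variable {S : Type*} [CommRing S]

lemma toPoly_mono {m : ℕ} (c : S) {k : ℕ} (hk : k < m) :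
    toPoly (mono m c k) = Finsupp.single k c := by
  classical
  unfold toPoly mono
  rw [Finset.sum_eq_single (⟨k, hk⟩ : Fin m)]
  · simp
  · intro i _ hi
    have : (i : ℕ) ≠ k := by
      intro h; apply hi; ext; simpa using h
    simp [this]
  · simp

lemma skewMul_single (σ : RingAut S) (i j : ℕ) (c d : S) :
    skewMul σ (Finsupp.single i c) (Finsupp.single j d)
      = Finsupp.single (i + j) (c * (σ ^ i) d) := by
  classical
  unfold skewMul
  rw [Finsupp.sum_single_index, Finsupp.sum_single_index]
  · simp
  · rw [Finsupp.sum_single_index] <;> simp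

lemma single_apply_fin {m n : ℕ} (c : S) (d : Fin m) :
    (Finsupp.single n c : ℕ →₀ S) (d : ℕ) = mono m c n d := by
  classical
  simp [Finsupp.single_apply, mono, eq_comm]

lemma reduceAux_single_low (σ : RingAut S) (m : ℕ) (f0 : Fin m → S)
    (K : ℕ) {n : ℕ} (hn : n < m) (c : S) :
    reduceAux σ m f0 K (Finsupp.single n c) = Finsupp.single n c := by
  induction K with
  | zero => rfl
  | succ K ih =>
      show reduceAux σ m f0 K _ = _
      have h1 : (Finsupp.single n c : ℕ →₀ S) (m + K) = 0 := by
        rw [Finsupp.single_apply_eq_zero]; intro h; omega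
      rw [h1]
      simp only [Finsupp.single_zero, zero_mul, sub_zero, Finset.sum_const_zero, add_zero]
      exact ih

lemma sum_constF (σ : RingAut S) {m : ℕ} (hm : 1 ≤ m) (b : S) (K : ℕ) (c : S) :
    (∑ j : Fin m, Finsupp.single (K + (j : ℕ)) (c * (σ ^ K) (constF m b j)))
      = Finsupp.single K (c * (σ ^ K) b) := by
  classical
  rw [Finset.sum_eq_single (⟨0, hm⟩ : Fin m)]
  · simp [constF]
  · intro i _ hi
    have : (i : ℕ) ≠ 0 := by
      intro h; apply hi; ext; simpa using h
    simp [constF, this]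
  · simp

lemma reduceAux_single_high (σ : RingAut S) {m : ℕ} (hm : 1 ≤ m) (b : S)
    (K : ℕ) {n : ℕ} (hn : m ≤ n) (hn2 : n - m < m) (hnK : n < m + K) (c : S) :
    reduceAux σ m (constF m b) K (Finsupp.single n c)
      = Finsupp.single (n - m) (c * (σ ^ (n - m)) b) := by
  induction K with
  | zero => omega
  | succ K ih =>
      show reduceAux σ m (constF m b) K _ = _
      by_cases hK : n = m + K
      · have h1 : (Finsupp.single n c : ℕ →₀ S) (m + K) = c := by
          rw [hK]; simp
        rw [h1, sum_constF σ hm]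
        have h2 : Finsupp.single n c - Finsupp.single (m + K) c = 0 := by
          rw [hK]; simp
        rw [h2, zero_add]
        have h3 : n - m = K := by omega
        rw [h3] at hn2 ⊢
        exact reduceAux_single_low σ m _ K hn2 _
      · have h1 : (Finsupp.single n c : ℕ →₀ S) (m + K) = 0 := by
          rw [Finsupp.single_apply_eq_zero]; intro h; omega
        rw [h1]
        simp only [Finsupp.single_zero, zero_mul, sub_zero, Finset.sum_const_zero, add_zero]
        exact ih (by omega)

lemma petit_mono_mul_low (σ : RingAut S) {m : ℕ} (b : S) {i j : ℕ}
    (hi : i < m) (hj : j < m) (hij : i + j < m) (c d : S) :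
    petitMulC σ m b (mono m c i) (mono m d j)
      = mono m (c * (σ ^ i) d) (i + j) := by
  funext x
  show reduceAux σ m (constF m b) m _ (x : ℕ) = _
  rw [toPoly_mono c hi, toPoly_mono d hj, skewMul_single,
    reduceAux_single_low σ m _ m hij, single_apply_fin]

lemma petit_mono_mul_high (σ : RingAut S) {m : ℕ} (hm : 1 ≤ m) (b : S) {i j : ℕ}
    (hi : i < m) (hj : j < m) (hij : m ≤ i + j) (c d : S) :
    petitMulC σ m b (mono m c i) (mono m d j)
      = mono m (c * (σ ^ i) d * (σ ^ (i + j - m)) b) (i + j - m) := by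
  funext x
  show reduceAux σ m (constF m b) m _ (x : ℕ) = _
  rw [toPoly_mono c hi, toPoly_mono d hj, skewMul_single,
    reduceAux_single_high σ hm b m hij (by omega) (by omega), single_apply_fin]

lemma pnorm_succ_left (τ : RingAut S) (s : ℕ) (α : S) :
    pnorm τ (s + 1) α = α * τ (pnorm τ s α) := by
  unfold pnorm
  rw [Finset.prod_range_succ', map_prod, pow_zero, mul_comm]
  congr 1
  refine Finset.prod_congr rfl fun x _ => ?_
  rw [pow_succ']
  rfl

lemma lpow_mono (σ : RingAut S) {m : ℕ} (b : S) (α : S) {k : ℕ} (hk : 0 < k)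
    {s : ℕ} (hs : s * k < m) :
    lpow σ m (constF m b) (mono m α k) s = mono m (pnorm (σ ^ k) s α) (s * k) := by
  induction s with
  | zero => simp [lpow, pone, pnorm]
  | succ s ih =>
      have he : k + s * k = (s + 1) * k := by ring
      have hsk : s * k < m := by omega
      have hkm : k < m := by omega
      show petitMulC σ m b (mono m α k) _ = _
      rw [ih hsk, petit_mono_mul_low σ b hkm hsk (by omega),
        (pnorm_succ_left (σ ^ k) s α).symm]
      rw [he]


lemma pnorm_succ_right (τ : RingAut S) (s : ℕ) (α : S) :
    pnorm τ (s + 1) α = pnorm τ s α * (τ ^ s) α := by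
  unfold pnorm; rw [Finset.prod_range_succ]

lemma map_mem_nzd (e : RingAut S) {a : S} (ha : a ∈ nonZeroDivisors S) :
    e a ∈ nonZeroDivisors S := by
  rw [mem_nonZeroDivisors_iff_right] at ha ⊢
  intro x hx
  have h1 : e.symm x * a = 0 := by simpa using congrArg e.symm hx
  have h2 : e.symm x = 0 := ha _ h1
  calc x = e (e.symm x) := (e.apply_symm_apply x).symm
    _ = 0 := by rw [h2]; simp

lemma pnorm_mem_nzd (τ : RingAut S) (s : ℕ) {α : S} (hα : α ∈ nonZeroDivisors S) :
    pnorm τ s α ∈ nonZeroDivisors S := by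
  unfold pnorm
  exact prod_mem fun j _ => map_mem_nzd _ hα

lemma mono_inj {m n : ℕ} (hn : n < m) {c d : S} (h : mono m c n = mono m d n) :
    c = d := by
  have := congrFun h ⟨n, hn⟩
  simpa [mono] using this

end Aux

open Aux

theorem stmt3 {S : Type*} [CommRing S] (σ : RingAut S) (m : ℕ) (hm : 1 ≤ m)
    (b : S) (hb : b ∈ nonZeroDivisors S) (α : S) (hα : α ∈ nonZeroDivisors S)
    (k : ℕ) (hk1 : 1 < k) (hkm : k < m)
    (r : ℕ) (hr0 : 0 < r) (hrk : m ≤ r * k)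
    (hleast : ∀ r' : ℕ, 0 < r' → m ≤ r' * k → r ≤ r')
    (hcomm :
      petitMulC σ m b (lpow σ m (constF m b) (mono m α k) r) (mono m α k)
        = petitMulC σ m b (mono m α k) (lpow σ m (constF m b) (mono m α k) r)) :
    α * b = (σ ^ m) α * (σ ^ k) b := by
  classical
  have hk0 : 0 < k := by omega
  have hr1k : (r - 1) * k < m := by
    by_contra hcon
    push_neg at hcon
    have hpos : 0 < r - 1 := by
      rcases Nat.eq_zero_or_pos (r - 1) with h | h
      · rw [h] at hcon; simp at hcon; omega
      · exact h
    have := hleast (r - 1) hpos hcon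
    omega
  have hrkk : k + (r - 1) * k = r * k := by
    have h : r - 1 + 1 = r := Nat.succ_pred_eq_of_pos hr0
    calc k + (r - 1) * k = (r - 1 + 1) * k := by ring
      _ = r * k := by rw [h]
  set e := r * k - m with he
  have hek : e < k := by omega
  have hem : e < m := by omega
  have hNr : α * (σ ^ k) (pnorm (σ ^ k) (r - 1) α) = pnorm (σ ^ k) r α := by
    rw [← pnorm_succ_left]
    congr 1
    omega
  have hidx : k + (r - 1) * k - m = e := by omega
  have hzr : lpow σ m (constF m b) (mono m α k) r
      = mono m (pnorm (σ ^ k) r α * (σ ^ e) b) e := by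
    conv_lhs => rw [show r = (r - 1) + 1 by omega]
    show petitMulC σ m b (mono m α k) (lpow σ m (constF m b) (mono m α k) (r - 1)) = _
    rw [lpow_mono σ b α hk0 hr1k, petit_mono_mul_high σ hm b hkm hr1k (by omega),
      hNr, hidx]
  rw [hzr] at hcomm
  set N := pnorm (σ ^ k) r α with hN
  set c := N * (σ ^ e) b with hc
  have key : c * (σ ^ e) α = α * (σ ^ k) c := by
    by_cases hcase : e + k < m
    · rw [petit_mono_mul_low σ b hem hkm hcase,
        petit_mono_mul_low σ b hkm hem (by omega)] at hcomm
      rw [Nat.add_comm k e] at hcomm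
      exact mono_inj (by omega) hcomm
    · push_neg at hcase
      rw [petit_mono_mul_high σ hm b hem hkm hcase,
        petit_mono_mul_high σ hm b hkm hem (by omega)] at hcomm
      rw [Nat.add_comm k e] at hcomm
      have h3 := mono_inj (by omega) hcomm
      exact (mul_cancel_right_mem_nonZeroDivisors (map_mem_nzd _ hb)).mp h3
  have hσkc : (σ ^ k) c = (σ ^ k) N * (σ ^ (k + e)) b := by
    rw [hc, map_mul]
    congr 1
    rw [pow_add]
    rfl
  have hαN : α * (σ ^ k) N = N * (σ ^ (r * k)) α := by
    have h1 : pnorm (σ ^ k) (r + 1) α = α * (σ ^ k) N := pnorm_succ_left _ _ _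
    have h2 : pnorm (σ ^ k) (r + 1) α = N * (σ ^ (r * k)) α := by
      rw [pnorm_succ_right]
      congr 1
      rw [mul_comm r k, pow_mul]
    rw [← h1, h2]
  rw [hσkc] at key
  have key2 : N * ((σ ^ e) b * (σ ^ e) α) = N * ((σ ^ (r * k)) α * (σ ^ (k + e)) b) := by
    calc N * ((σ ^ e) b * (σ ^ e) α) = c * (σ ^ e) α := by rw [hc]; ring
      _ = α * ((σ ^ k) N * (σ ^ (k + e)) b) := key
      _ = (α * (σ ^ k) N) * (σ ^ (k + e)) b := by ring
      _ = (N * (σ ^ (r * k)) α) * (σ ^ (k + e)) b := by rw [hαN]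
      _ = N * ((σ ^ (r * k)) α * (σ ^ (k + e)) b) := by ring
  have key3 : (σ ^ e) b * (σ ^ e) α = (σ ^ (r * k)) α * (σ ^ (k + e)) b :=
    (mul_cancel_left_mem_nonZeroDivisors (pnorm_mem_nzd _ _ hα)).mp key2
  have h4 : (σ ^ (r * k)) α = (σ ^ e) ((σ ^ m) α) := by
    rw [show r * k = e + m by omega, pow_add]
    rfl
  have h5 : (σ ^ (k + e)) b = (σ ^ e) ((σ ^ k) b) := by
    rw [show k + e = e + k by omega, pow_add]
    rfl
  rw [h4, h5, ← map_mul, ← map_mul] at key3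
  have hfin := (σ ^ e : RingAut S).injective key3
  rw [mul_comm α b]
  exact hfin
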